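/- Let {f_n} be the Schur iterates: f_{n+1}(z) = (f_n(z) - f_n(0))/(z(1 - conj(f_n(0)) f_n(z))), with each f_n in the Schur class (analytic, |f_n| ≤ 1 on 𝔻, and |f_n(0)| < 1), φ_n(z) = z f_n(z), a_n = f_n(0), ρ_n = √(1 - |a_n|²). Then on the unit circle, |1 - conj(a_n) f_n(t)|² · (1 - |f_{n+1}(t)|²) = ρ_n² (1 - |f_n(t)|²) a.e.; consequently if ψ_n, ψ_{n+1} are outer functions with |ψ_n|² = 1 - |φ_n|² and |ψ_{n+1}|² = 1 - |φ_{n+1}|² and positive at 0, then ψ_{n+1} = ψ_n · ρ_n / (1 - conj(a_n) f_n) up to the outer normalization. -/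

import Mathlib

open Complex ComplexConjugate

theorem stmt7 (t a f f1 ψ ψ1 : ℂ)
    (ht : ‖t‖ = 1) (ha : ‖a‖ < 1) (hf : ‖f‖ ≤ 1)
    (hrec : f1 * (t * (1 - conj a * f)) = f - a) :
    ‖1 - conj a * f‖ ^ 2 * (1 - ‖f1‖ ^ 2) =
      (1 - ‖a‖ ^ 2) * (1 - ‖f‖ ^ 2) ∧
    (‖ψ‖ ^ 2 = 1 - ‖t * f‖ ^ 2 →
     ‖ψ1‖ ^ 2 = 1 - ‖t * f1‖ ^ 2 →
     ‖ψ1‖ * ‖1 - conj a * f‖ =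
       ‖ψ‖ * Real.sqrt (1 - ‖a‖ ^ 2)) := by
  have hat : ‖t‖ = 1 := ht
  have habs : ‖f1‖ * ‖1 - conj a * f‖ = ‖f - a‖ := by
    have := congrArg norm hrec
    simpa [norm_mul, hat, mul_comm, mul_left_comm, mul_assoc] using this
  have key : ‖1 - conj a * f‖ ^ 2 - ‖f - a‖ ^ 2 =
      (1 - ‖a‖ ^ 2) * (1 - ‖f‖ ^ 2) := by
    simp only [Complex.sq_norm, Complex.normSq_apply, Complex.sub_re, Complex.sub_im,
      Complex.mul_re, Complex.mul_im, Complex.conj_re, Complex.conj_im,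
      Complex.one_re, Complex.one_im]
    ring
  have part1 : ‖1 - conj a * f‖ ^ 2 * (1 - ‖f1‖ ^ 2) =
      (1 - ‖a‖ ^ 2) * (1 - ‖f‖ ^ 2) := by
    have : ‖1 - conj a * f‖ ^ 2 * (1 - ‖f1‖ ^ 2) =
        ‖1 - conj a * f‖ ^ 2 -
          (‖f1‖ * ‖1 - conj a * f‖) ^ 2 := by ring
    rw [this, habs, key]
  refine ⟨part1, fun hψ hψ1 => ?_⟩
  have hna : (0:ℝ) ≤ 1 - ‖a‖ ^ 2 := by nlinarith [norm_nonneg a]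
  have hψ' : ‖ψ‖ ^ 2 = 1 - ‖f‖ ^ 2 := by
    simpa [norm_mul, hat] using hψ
  have hψ1' : ‖ψ1‖ ^ 2 = 1 - ‖f1‖ ^ 2 := by
    simpa [norm_mul, hat] using hψ1
  have hsq : (‖ψ1‖ * ‖1 - conj a * f‖) ^ 2 =
      (‖ψ‖ * Real.sqrt (1 - ‖a‖ ^ 2)) ^ 2 := by
    have : (‖ψ‖ * Real.sqrt (1 - ‖a‖ ^ 2)) ^ 2 =
        ‖ψ‖ ^ 2 * (1 - ‖a‖ ^ 2) := by
      rw [mul_pow, Real.sq_sqrt hna]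
    rw [this, hψ', mul_pow, hψ1']
    have hnorm : ‖a‖ = ‖a‖ := rfl
    rw [hnorm]
    linarith [part1]
  have h1 : (0:ℝ) ≤ ‖ψ1‖ * ‖1 - conj a * f‖ :=
    mul_nonneg (norm_nonneg _) (norm_nonneg _)
  have h2 : (0:ℝ) ≤ ‖ψ‖ * Real.sqrt (1 - ‖a‖ ^ 2) :=
    mul_nonneg (norm_nonneg _) (Real.sqrt_nonneg _)
  nlinarith [hsq, h1, h2]
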